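/- Let θ be drawn from Beta(S+1, F+1) where S + F = ℓ and the empirical mean is μ̃ = S/ℓ. Then for Δ ∈ (0,1], P(θ > μ̃ + Δ/4) = F^{Binom}_{ℓ+1, μ̃+Δ/4}(S) ≤ F^{Binom}_{ℓ, μ̃+Δ/4}(S) ≤ exp(−2Δ²ℓ/16). -/

import Mathlib

open intervalIntegral

/-- The CDF of the Beta distribution with integer parameters `S+1`, `F+1`. -/
noncomputable def betaCdf (S F : ℕ) (y : ℝ) : ℝ :=
  (∫ x in (0:ℝ)..y, x ^ S * (1 - x) ^ F) / (∫ x in (0:ℝ)..(1:ℝ), x ^ S * (1 - x) ^ F)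

/-- The CDF of the Binomial distribution with `n` trials and success probability `p`,
evaluated at a real threshold `r`. -/
noncomputable def binomCdf (n : ℕ) (p r : ℝ) : ℝ :=
  ∑ j ∈ Finset.range (n + 1),
    if (j : ℝ) ≤ r then (n.choose j : ℝ) * p ^ j * (1 - p) ^ (n - j) else 0

section Helpers

lemma integral_polynomial_deriv (P : Polynomial ℝ) (y : ℝ) :
    ∫ x in (0:ℝ)..y, (Polynomial.derivative P).eval x = P.eval y - P.eval 0 := by
  apply intervalIntegral.integral_deriv_eq_sub' (fun x => P.eval x)
  · funext x; exact (P.hasDerivAt x).deriv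
  · intro x _; exact (P.hasDerivAt x).differentiableAt
  · exact (Polynomial.continuous _).continuousOn

noncomputable def tailPoly (S F : ℕ) : Polynomial ℝ :=
  ∑ j ∈ Finset.Ico (S+1) (S+F+2), bernsteinPolynomial ℝ (S+F+1) j

lemma tailPoly_deriv (S F : ℕ) :
    Polynomial.derivative (tailPoly S F) =
      ((S+F+1 : ℕ) : Polynomial ℝ) * bernsteinPolynomial ℝ (S+F) S := by
  unfold tailPoly
  rw [map_sum]
  have h1 : ∀ j ∈ Finset.Ico (S+1) (S+F+2),
      Polynomial.derivative (bernsteinPolynomial ℝ (S+F+1) j) =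
      ((S+F+1 : ℕ) : Polynomial ℝ) *
        (bernsteinPolynomial ℝ (S+F) (j-1) - bernsteinPolynomial ℝ (S+F) j) := by
    intro j hj
    simp only [Finset.mem_Ico] at hj
    obtain ⟨i, rfl⟩ : ∃ i, j = i + 1 := ⟨j - 1, by omega⟩
    have := bernsteinPolynomial.derivative_succ (R := ℝ) (S+F+1) i
    simpa using this
  rw [Finset.sum_congr rfl h1, ← Finset.mul_sum]
  congr 1
  rw [Finset.sum_Ico_eq_sum_range]
  have h2 : S + F + 2 - (S + 1) = F + 1 := by omega
  rw [h2]
  have h3 : ∀ i ∈ Finset.range (F+1),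
      bernsteinPolynomial ℝ (S+F) (S + 1 + i - 1) - bernsteinPolynomial ℝ (S+F) (S + 1 + i)
      = bernsteinPolynomial ℝ (S+F) (S + i) - bernsteinPolynomial ℝ (S+F) (S + (i+1)) := by
    intro i _
    congr 2 <;> omega
  rw [Finset.sum_congr rfl h3, Finset.sum_range_sub' (fun i => bernsteinPolynomial ℝ (S+F) (S+i))]
  have : bernsteinPolynomial ℝ (S+F) (S + (F+1)) = 0 :=
    bernsteinPolynomial.eq_zero_of_lt ℝ (by omega)
  rw [this, sub_zero, add_zero]

lemma tailPoly_eval_zero (S F : ℕ) : (tailPoly S F).eval 0 = 0 := by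
  unfold tailPoly
  rw [Polynomial.eval_finset_sum]
  apply Finset.sum_eq_zero
  intro j hj
  simp only [Finset.mem_Ico] at hj
  rw [bernsteinPolynomial.eval_at_0]
  have : j ≠ 0 := by omega
  simp [this]

lemma tailPoly_eval_one (S F : ℕ) : (tailPoly S F).eval 1 = 1 := by
  unfold tailPoly
  rw [Polynomial.eval_finset_sum]
  have : ∀ j ∈ Finset.Ico (S+1) (S+F+2),
      (bernsteinPolynomial ℝ (S+F+1) j).eval 1 = if j = S+F+1 then 1 else 0 := fun j _ =>
    bernsteinPolynomial.eval_at_1 ℝ _ _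
  rw [Finset.sum_congr rfl this, Finset.sum_ite_eq' (Finset.Ico (S+1) (S+F+2)) (S+F+1) (fun _ => (1:ℝ))]
  simp [Finset.mem_Ico]

lemma integral_pow_mul (S F : ℕ) (y : ℝ) :
    ((S+F+1 : ℕ) : ℝ) * ((S+F).choose S : ℝ) * ∫ x in (0:ℝ)..y, x ^ S * (1 - x) ^ F
      = (tailPoly S F).eval y := by
  have h := integral_polynomial_deriv (tailPoly S F) y
  rw [tailPoly_deriv, tailPoly_eval_zero, sub_zero] at h
  have h2 : ∀ x : ℝ, ((((S+F+1 : ℕ) : Polynomial ℝ) * bernsteinPolynomial ℝ (S+F) S).eval x)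
      = ((S+F+1 : ℕ) : ℝ) * ((S+F).choose S : ℝ) * (x ^ S * (1 - x) ^ F) := by
    intro x
    simp [bernsteinPolynomial]
    ring
  rw [intervalIntegral.integral_congr (fun x _ => h2 x)] at h
  rw [intervalIntegral.integral_const_mul] at h
  exact h

lemma betaCdf_eq (S F : ℕ) (y : ℝ) :
    betaCdf S F y = (tailPoly S F).eval y := by
  unfold betaCdf
  have hch : 0 < ((S+F).choose S) := Nat.choose_pos (by omega)
  have c0 : ((S+F+1 : ℕ) : ℝ) * ((S+F).choose S : ℝ) ≠ 0 := by
    have : (0:ℝ) < ((S+F+1 : ℕ) : ℝ) * ((S+F).choose S : ℝ) := by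
      apply mul_pos
      · exact_mod_cast Nat.succ_pos _
      · exact_mod_cast hch
    linarith
  have hy := integral_pow_mul S F y
  have h1 := integral_pow_mul S F 1
  rw [tailPoly_eval_one] at h1
  set c := ((S+F+1 : ℕ) : ℝ) * ((S+F).choose S : ℝ) with hc
  have hI1 : (∫ x in (0:ℝ)..(1:ℝ), x ^ S * (1 - x) ^ F) = 1 / c := by
    field_simp at h1 ⊢
    linarith [h1]
  rw [hI1, div_div_eq_mul_div, div_one, ← hy]
  ring

lemma tailPoly_eval (S F : ℕ) (y : ℝ) :
    (tailPoly S F).eval y = ∑ j ∈ Finset.Ico (S+1) (S+F+2),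
      ((S+F+1).choose j : ℝ) * y ^ j * (1 - y) ^ (S+F+1-j) := by
  unfold tailPoly
  rw [Polynomial.eval_finset_sum]
  apply Finset.sum_congr rfl
  intro j _
  simp [bernsteinPolynomial]

lemma binomCdf_eq_nat (n k : ℕ) (p : ℝ) (hk : k ≤ n) :
    binomCdf n p k = ∑ j ∈ Finset.range (k+1), (n.choose j : ℝ) * p ^ j * (1 - p) ^ (n - j) := by
  unfold binomCdf
  rw [← Finset.sum_subset (Finset.range_subset_range.2 (by omega : k+1 ≤ n+1))]
  · apply Finset.sum_congr rfl
    intro j hj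
    simp only [Finset.mem_range] at hj
    have : (j : ℝ) ≤ k := by exact_mod_cast Nat.lt_succ_iff.mp hj
    simp [this]
  · intro j _ hj
    simp only [Finset.mem_range, not_lt] at hj
    have : ¬ ((j : ℝ) ≤ k) := by
      push_neg; exact_mod_cast Nat.lt_of_succ_le hj
    simp [this]

lemma sum_bernoulli_split (n k : ℕ) (y : ℝ) (hk : k ≤ n) :
    (∑ j ∈ Finset.range (k+1), (n.choose j : ℝ) * y ^ j * (1 - y) ^ (n - j))
    + (∑ j ∈ Finset.Ico (k+1) (n+1), (n.choose j : ℝ) * y ^ j * (1 - y) ^ (n - j)) = 1 := by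
  rw [Finset.range_eq_Ico, Finset.sum_Ico_consecutive _ (by omega : 0 ≤ k+1) (by omega : k+1 ≤ n+1)]
  have h := add_pow y (1-y) n
  simp only [add_sub_cancel, one_pow] at h
  rw [← Finset.range_eq_Ico]
  conv_rhs => rw [h]
  apply Finset.sum_congr rfl
  intro j _
  ring

lemma binom_mono (n k : ℕ) (p : ℝ) (hp0 : 0 ≤ p) (hp1 : p ≤ 1) (hk : k ≤ n) :
    ∑ j ∈ Finset.range (k+1), ((n+1).choose j : ℝ) * p ^ j * (1-p) ^ (n+1-j)
    ≤ ∑ j ∈ Finset.range (k+1), (n.choose j : ℝ) * p ^ j * (1-p) ^ (n-j) := by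
  set g : ℕ → ℝ := fun j => (n.choose j : ℝ) * p ^ j * (1-p) ^ (n-j) with hg
  have hgnn : ∀ j, 0 ≤ g j := by
    intro j
    apply mul_nonneg (mul_nonneg (by positivity) (by positivity))
    exact pow_nonneg (by linarith) _
  set A := ∑ j ∈ Finset.range (k+1), g j with hA
  set B := ∑ j ∈ Finset.range k, g j with hB
  have hBA : B ≤ A := by
    rw [hA, Finset.sum_range_succ]
    linarith [hgnn k]
  have hAnn : 0 ≤ A := Finset.sum_nonneg fun j _ => hgnn j
  have key : ∑ j ∈ Finset.range (k+1), ((n+1).choose j : ℝ) * p ^ j * (1-p) ^ (n+1-j)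
      = (1-p) * A + p * B := by
    rw [hA, hB, Finset.mul_sum, Finset.mul_sum, Finset.sum_range_succ' _ k,
      Finset.sum_range_succ' (fun j => (1-p) * g j) k]
    have hterm : ∀ i ∈ Finset.range k,
        ((n+1).choose (i+1) : ℝ) * p ^ (i+1) * (1-p) ^ (n+1-(i+1))
        = (1-p) * g (i+1) + p * g i := by
      intro i hi
      simp only [Finset.mem_range] at hi
      have h1 : n + 1 - (i+1) = n - i := by omega
      have h2 : n - (i+1) + 1 = n - i := by omega
      have h3 : (n+1).choose (i+1) = n.choose i + n.choose (i+1) := Nat.choose_succ_succ n i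
      rw [h1, h3, hg]
      simp only
      rw [← h2]
      push_cast
      ring
    rw [Finset.sum_congr rfl hterm, Finset.sum_add_distrib]
    have h0 : ((n+1).choose 0 : ℝ) * p ^ 0 * (1-p) ^ (n+1-0) = (1-p) * g 0 := by
      simp [hg]; ring
    rw [h0]
    ring
  rw [key]
  nlinarith

lemma bernoulli_mgf_bound (q : ℝ) (hq0 : 0 ≤ q) (hq1 : q ≤ 1) (t : ℝ) (ht : 0 ≤ t) :
    q * Real.exp (-t) + (1 - q) ≤ Real.exp (t^2/8 - t*q) := by
  set D : ℝ → ℝ := fun s => q * Real.exp (-s) + (1 - q) with hDdef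
  have hD : ∀ s, 0 < D s := by
    intro s
    have he := Real.exp_pos (-s)
    rcases eq_or_lt_of_le hq1 with h | h
    · simp [hDdef, ← h]; positivity
    · have : 0 ≤ q * Real.exp (-s) := mul_nonneg hq0 he.le
      simp only [hDdef]; linarith
  have hDd : ∀ s, HasDerivAt D (-(q * Real.exp (-s))) s := by
    intro s
    have h1 : HasDerivAt (fun s : ℝ => Real.exp (-s)) (-Real.exp (-s)) s := by
      simpa [Function.comp_def] using (Real.hasDerivAt_exp (-s)).comp s (hasDerivAt_neg s)
    exact ((h1.const_mul q).add_const (1 - q)).congr_deriv (by ring)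
  set f : ℝ → ℝ := fun s => s^2/8 - s*q - Real.log (D s) with hfdef
  set f' : ℝ → ℝ := fun s => s/4 - q + q * Real.exp (-s) / D s with hf'def
  have hfd : ∀ s, HasDerivAt f (f' s) s := by
    intro s
    have hlog : HasDerivAt (fun s => Real.log (D s)) (-(q * Real.exp (-s)) / D s) s :=
      (hDd s).log (hD s).ne'
    have h2 : HasDerivAt (fun s : ℝ => s^2/8 - s*q) (s/4 - q) s := by
      have := ((hasDerivAt_pow 2 s).div_const 8).sub ((hasDerivAt_id s).mul_const q)
      exact this.congr_deriv (by ring)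
    exact (h2.sub hlog).congr_deriv (by show _ = s/4 - q + q * Real.exp (-s) / D s; ring)
  have hf'd : ∀ s, HasDerivAt f' (1/4 + (-(q * Real.exp (-s)) * D s - q * Real.exp (-s) * -(q * Real.exp (-s))) / (D s)^2) s := by
    intro s
    have h1 : HasDerivAt (fun s : ℝ => Real.exp (-s)) (-Real.exp (-s)) s := by
      simpa [Function.comp_def] using (Real.hasDerivAt_exp (-s)).comp s (hasDerivAt_neg s)
    have hnum : HasDerivAt (fun s => q * Real.exp (-s)) (-(q * Real.exp (-s))) s := by
      simpa [mul_neg] using h1.const_mul q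
    have hdiv := hnum.div (hDd s) (hD s).ne'
    have hlin : HasDerivAt (fun s : ℝ => s/4 - q) (1/4) s := by
      simpa using ((hasDerivAt_id s).div_const 4).sub_const q
    exact hlin.add hdiv
  have hf'nonneg : ∀ s, 0 ≤ 1/4 + (-(q * Real.exp (-s)) * D s - q * Real.exp (-s) * -(q * Real.exp (-s))) / (D s)^2 := by
    intro s
    have hDs := hD s
    have he := Real.exp_pos (-s)
    have hN : (-(q * Real.exp (-s)) * D s - q * Real.exp (-s) * -(q * Real.exp (-s)))
        = -(q * Real.exp (-s) * (1 - q)) := by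
      simp only [hDdef]; ring
    rw [hN, neg_div, ← sub_eq_add_neg, sub_nonneg, div_le_iff₀ (by positivity)]
    nlinarith [sq_nonneg (q * Real.exp (-s) - (1 - q))]
  have hf'cont : Continuous f' := by
    rw [continuous_iff_continuousAt]
    exact fun x => (hf'd x).continuousAt
  have hfcont : Continuous f := by
    rw [continuous_iff_continuousAt]
    exact fun x => (hfd x).continuousAt
  have mono1 : MonotoneOn f' (Set.Ici (0:ℝ)) := by
    apply monotoneOn_of_deriv_nonneg (convex_Ici 0) hf'cont.continuousOn
    · exact fun x _ => (hf'd x).differentiableAt.differentiableWithinAt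
    · intro x _
      rw [(hf'd x).deriv]
      exact hf'nonneg x
  have hf'0 : f' 0 = 0 := by
    simp [hf'def, hDdef]
  have hf'pos : ∀ s ∈ Set.Ici (0:ℝ), 0 ≤ f' s := by
    intro s hs
    rw [← hf'0]
    exact mono1 (Set.self_mem_Ici) hs hs
  have mono2 : MonotoneOn f (Set.Ici (0:ℝ)) := by
    apply monotoneOn_of_deriv_nonneg (convex_Ici 0) hfcont.continuousOn
    · exact fun x _ => (hfd x).differentiableAt.differentiableWithinAt
    · intro x hx
      rw [(hfd x).deriv]
      exact hf'pos x (le_of_lt (by simpa using hx))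
  have hf0 : f 0 = 0 := by
    simp [hfdef, hDdef]
  have hft : 0 ≤ f t := by
    rw [← hf0]
    exact mono2 (Set.self_mem_Ici) ht ht
  have hlog : Real.log (D t) ≤ t^2/8 - t*q := by
    simp only [hfdef] at hft
    linarith
  have := (Real.log_le_iff_le_exp (hD t)).mp hlog
  simpa [hDdef] using this

lemma chernoff_step (n k : ℕ) (q t : ℝ) (hq0 : 0 ≤ q) (hq1 : q ≤ 1) (hk : k ≤ n) (ht : 0 ≤ t) :
    ∑ j ∈ Finset.range (k+1), (n.choose j : ℝ) * q ^ j * (1-q) ^ (n-j)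
      ≤ Real.exp (t * k) * (q * Real.exp (-t) + (1 - q)) ^ n := by
  set g : ℕ → ℝ := fun j => (n.choose j : ℝ) * (q * Real.exp (-t)) ^ j * (1-q) ^ (n-j) with hg
  have hq' : 0 ≤ 1 - q := by linarith
  have hgnn : ∀ j, 0 ≤ g j := by
    intro j
    apply mul_nonneg (mul_nonneg (by positivity) _) (pow_nonneg hq' _)
    exact pow_nonneg (mul_nonneg hq0 (Real.exp_pos _).le) _
  have step1 : ∑ j ∈ Finset.range (k+1), (n.choose j : ℝ) * q ^ j * (1-q) ^ (n-j)
      ≤ ∑ j ∈ Finset.range (k+1), Real.exp (t * k) * g j := by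
    apply Finset.sum_le_sum
    intro j hj
    simp only [Finset.mem_range] at hj
    have hjk : j ≤ k := by omega
    have hexp : Real.exp (t * k) * g j
        = Real.exp (t * k - t * j) * ((n.choose j : ℝ) * q ^ j * (1-q) ^ (n-j)) := by
      have e1 : Real.exp (t*k - t*j) = Real.exp (t*k) * Real.exp ((j:ℕ) * (-t)) := by
        rw [← Real.exp_add]
        congr 1
        ring
      rw [e1, hg]
      simp only
      rw [mul_pow, ← Real.exp_nat_mul]
      ring
    rw [hexp]
    have h1 : (1:ℝ) ≤ Real.exp (t * k - t * j) := by
      rw [Real.one_le_exp_iff]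
      have : (j:ℝ) ≤ k := by exact_mod_cast hjk
      nlinarith
    nlinarith [mul_nonneg (mul_nonneg (show (0:ℝ) ≤ (n.choose j : ℝ) by positivity) (pow_nonneg hq0 j)) (pow_nonneg hq' (n-j))]
  calc ∑ j ∈ Finset.range (k+1), (n.choose j : ℝ) * q ^ j * (1-q) ^ (n-j)
      ≤ ∑ j ∈ Finset.range (k+1), Real.exp (t * k) * g j := step1
    _ ≤ ∑ j ∈ Finset.range (n+1), Real.exp (t * k) * g j := by
        apply Finset.sum_le_sum_of_subset_of_nonneg (Finset.range_subset_range.2 (by omega))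
        intro j _ _
        exact mul_nonneg (Real.exp_pos _).le (hgnn j)
    _ = Real.exp (t * k) * (q * Real.exp (-t) + (1 - q)) ^ n := by
        rw [← Finset.mul_sum]
        congr 1
        rw [add_pow]
        apply Finset.sum_congr rfl
        intro j _
        rw [hg]; ring

end Helpers

/-- Thompson sample tail bound: for `θ ~ Beta(S+1, F+1)` with `ℓ = S + F ≥ 1`,
empirical mean `μ̃ = S/ℓ` and `Δ ∈ (0,1]` with `μ̃ + Δ/4 ≤ 1`,
`P(θ > μ̃ + Δ/4) = F^{Binom}_{ℓ+1, μ̃+Δ/4}(S) ≤ F^{Binom}_{ℓ, μ̃+Δ/4}(S)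
≤ exp(−2Δ²ℓ/16)`. -/
theorem ts_sample_tail (S F : ℕ) (hℓ : 1 ≤ S + F) (Δ : ℝ)
    (hΔ0 : 0 < Δ) (hΔ1 : Δ ≤ 1)
    (hq : (S : ℝ) / (S + F) + Δ / 4 ≤ 1) :
    1 - betaCdf S F ((S : ℝ) / (S + F) + Δ / 4) =
      binomCdf (S + F + 1) ((S : ℝ) / (S + F) + Δ / 4) S ∧
    binomCdf (S + F + 1) ((S : ℝ) / (S + F) + Δ / 4) S ≤
      binomCdf (S + F) ((S : ℝ) / (S + F) + Δ / 4) S ∧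
    binomCdf (S + F) ((S : ℝ) / (S + F) + Δ / 4) S ≤
      Real.exp (-(2 * Δ ^ 2 * (S + F : ℕ)) / 16) := by
  set p : ℝ := (S : ℝ) / (S + F) + Δ / 4 with hpdef
  have hℓR : (0:ℝ) < ((S + F : ℕ) : ℝ) := by exact_mod_cast hℓ
  have hℓR' : ((S:ℝ) + F) = ((S + F : ℕ) : ℝ) := by push_cast; ring
  have hp0 : 0 ≤ p := by
    have : (0:ℝ) ≤ (S : ℝ) / (S + F) := by positivity
    rw [hpdef]; linarith
  have hp1 : p ≤ 1 := hq
  refine ⟨?_, ?_, ?_⟩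
  · -- Part 1: Beta-Binomial identity
    rw [betaCdf_eq, tailPoly_eval, binomCdf_eq_nat (S+F+1) S p (by omega)]
    have hsplit := sum_bernoulli_split (S+F+1) S p (by omega)
    have hIco : S + F + 1 + 1 = S + F + 2 := by omega
    rw [hIco] at hsplit
    linarith
  · -- Part 2: monotonicity in number of trials
    rw [binomCdf_eq_nat (S+F+1) S p (by omega), binomCdf_eq_nat (S+F) S p (by omega)]
    exact binom_mono (S+F) S p hp0 hp1 (by omega)
  · -- Part 3: Hoeffding bound
    rw [binomCdf_eq_nat (S+F) S p (by omega)]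
    have hbase : 0 ≤ p * Real.exp (-Δ) + (1 - p) := by
      have := mul_nonneg hp0 (Real.exp_pos (-Δ)).le
      linarith
    calc ∑ j ∈ Finset.range (S+1), ((S+F).choose j : ℝ) * p ^ j * (1-p) ^ (S+F-j)
        ≤ Real.exp (Δ * S) * (p * Real.exp (-Δ) + (1 - p)) ^ (S+F) :=
          chernoff_step (S+F) S p Δ hp0 hp1 (by omega) hΔ0.le
      _ ≤ Real.exp (Δ * S) * (Real.exp (Δ^2/8 - Δ*p)) ^ (S+F) := by
          apply mul_le_mul_of_nonneg_left _ (Real.exp_pos _).le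
          exact pow_le_pow_left₀ hbase (bernoulli_mgf_bound p hp0 hp1 Δ hΔ0.le) _
      _ = Real.exp (Δ * S + ((S+F:ℕ):ℝ) * (Δ^2/8 - Δ*p)) := by
          rw [← Real.exp_nat_mul, ← Real.exp_add]
      _ = Real.exp (-(2 * Δ ^ 2 * (S + F : ℕ)) / 16) := by
          congr 1
          rw [hpdef]
          have hne : ((S + F : ℕ) : ℝ) ≠ 0 := ne_of_gt hℓR
          rw [← hℓR'] at hne ⊢
          field_simp
          ring
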